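/- Let Q be a primitive string and let i ≥ 1 be an integer that is not a multiple of |Q|. Then for every integer m ≥ 1, hd(Q^∞[1..m], Q^∞[i+1..i+m]) ≥ ⌊m/|Q|⌋. -/

import Mathlib

variable {α : Type*}

/-- Hamming distance: the number of positions at which two (equal-length) strings differ. -/
def hamDist [DecidableEq α] (S T : List α) : ℕ :=
  ((S.zip T).filter fun c => decide (c.1 ≠ c.2)).length

/-- 1-based substring `T[i..j]` (inclusive). -/
def substr (T : List α) (i j : ℕ) : List α := (T.drop (i - 1)).take (j - i + 1)

/-- `Q^m`: the concatenation of `m` copies of `Q`. -/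
def listPow (Q : List α) (m : ℕ) : List α := (List.replicate m Q).flatten

/-- `Q^∞[a..b]`: the segment from position `a` through `b` (1-based) of the infinite
periodic string `Q^∞` with `Q^∞[i] = Q[((i−1) mod |Q|) + 1]`. -/
def infSeg (Q : List α) (a b : ℕ) : List α := substr (listPow Q b) a b

/-- A nonempty string is primitive if it is not a power of a strictly shorter string,
i.e. it equals `R^m` only for `m = 1`. -/
def PrimitiveStr (Q : List α) : Prop :=
  Q ≠ [] ∧ ∀ (R : List α) (m : ℕ), Q = listPow R m → m = 1

/-- The forward cyclic rotation `rot(S) = S[m]·S[1..m−1]`. -/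
def rot (S : List α) : List α := S.rotate (S.length - 1)

/-- `p` is a `k`-mismatch period of `T`: `1 ≤ p ≤ |T|` and
`hd(T[1..n−p+1], T[p..n]) ≤ k`. -/
def IsMismatchPeriod [DecidableEq α] (k p : ℕ) (T : List α) : Prop :=
  1 ≤ p ∧ p ≤ T.length ∧
    hamDist (substr T 1 (T.length - p + 1)) (substr T p T.length) ≤ k

/- ---------- auxiliary material ---------- -/

lemma listPow_length (Q : List α) (m : ℕ) : (listPow Q m).length = m * Q.length := by
  induction m with
  | zero => simp [listPow]
  | succ n ih =>
    simp only [listPow, List.replicate_succ, List.flatten_cons, List.length_append,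
      Nat.succ_mul] at *
    omega

lemma listPow_succ (Q : List α) (m : ℕ) : listPow Q (m + 1) = Q ++ listPow Q m := by
  simp [listPow, List.replicate_succ]

lemma listPow_getElem (Q : List α) (hq : 0 < Q.length) (m n : ℕ)
    (h : n < (listPow Q m).length) :
    (listPow Q m)[n] = Q[n % Q.length]'(Nat.mod_lt _ hq) := by
  induction m generalizing n with
  | zero => simp [listPow] at h
  | succ k ih =>
    have e := listPow_succ Q k
    have h2 : n < (Q ++ listPow Q k).length := e ▸ h
    rw [List.getElem_of_eq e h]
    by_cases hn : n < Q.length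
    · rw [List.getElem_append_left hn]
      congr 1
      exact (Nat.mod_eq_of_lt hn).symm
    · push_neg at hn
      rw [List.getElem_append_right hn]
      have hlt : n - Q.length < (listPow Q k).length := by
        rw [listPow_length] at *
        simp only [List.length_append, listPow_length] at h2
        omega
      rw [ih _ hlt]
      congr 1
      conv_rhs => rw [← Nat.sub_add_cancel hn]
      rw [Nat.add_mod_right]

lemma per_mul {f : ℕ → α} {p : ℕ} (hf : ∀ t, f (t + p) = f t) (k t : ℕ) :
    f (t + p * k) = f t := by
  induction k with
  | zero => simp
  | succ n ih =>
    have he : t + p * (n + 1) = (t + p * n) + p := by ring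
    rw [he, hf, ih]

lemma per_mod {f : ℕ → α} {p : ℕ} (hf : ∀ t, f (t + p) = f t) (n : ℕ) :
    f n = f (n % p) := by
  conv_lhs => rw [← Nat.mod_add_div n p]
  rw [per_mul hf]

lemma per_gcd {f : ℕ → α} : ∀ a b, (∀ t, f (t + a) = f t) → (∀ t, f (t + b) = f t) →
    ∀ t, f (t + Nat.gcd a b) = f t := by
  intro a
  induction a using Nat.strong_induction_on with
  | _ a ih =>
    intro b ha hb t
    rcases Nat.eq_zero_or_pos a with h0 | hpos
    · subst h0; simpa using hb t
    · rw [Nat.gcd_rec a b]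
      refine ih (b % a) (Nat.mod_lt b hpos) a ?_ ha t
      intro s
      have he : s + b % a + a * (b / a) = s + b := by
        rw [Nat.add_assoc, Nat.mod_add_div]
      calc f (s + b % a) = f (s + b % a + a * (b / a)) := (per_mul ha _ _).symm
        _ = f (s + b) := by rw [he]
        _ = f s := hb s

/-- the periodic extension `Q^∞` as a function (0-based). -/
def perF (Q : List α) (hq : 0 < Q.length) (n : ℕ) : α :=
  Q[n % Q.length]'(Nat.mod_lt _ hq)

lemma perF_period (Q : List α) (hq : 0 < Q.length) (t : ℕ) :
    perF Q hq (t + Q.length) = perF Q hq t := by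
  simp [perF, Nat.add_mod_right]

lemma exists_mismatch [DecidableEq α] (Q : List α) (hQ : PrimitiveStr Q)
    (hq : 0 < Q.length) (i : ℕ) (hnd : ¬ Q.length ∣ i) :
    ∃ t, t < Q.length ∧ perF Q hq t ≠ perF Q hq (i + t) := by
  by_contra hcon
  push_neg at hcon
  set q := Q.length with hqdef
  set F := perF Q hq with hFdef
  have hperq : ∀ t, F (t + q) = F t := perF_period Q hq
  have hFmod : ∀ n, F n = F (n % q) := per_mod hperq
  -- F has period i
  have hperi : ∀ t, F (t + i) = F t := by
    intro t
    have key : (t + i) % q = (t % q + i) % q := by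
      conv_lhs => rw [← Nat.mod_add_div t q]
      rw [Nat.add_right_comm, Nat.add_mul_mod_self_left]
    have step : F (i + t % q) = F t := by
      rw [← hcon (t % q) (Nat.mod_lt _ hq)]
      exact (hFmod t).symm
    calc F (t + i) = F ((t + i) % q) := hFmod _
      _ = F ((t % q + i) % q) := by rw [key]
      _ = F (t % q + i) := (hFmod _).symm
      _ = F (i + t % q) := by rw [Nat.add_comm]
      _ = F t := step
  -- F has period g = gcd i q
  set g := Nat.gcd i q with hgdef
  have hperg : ∀ t, F (t + g) = F t := per_gcd i q hperi hperq
  have hgq : g ∣ q := Nat.gcd_dvd_right i q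
  have hgi : g ∣ i := Nat.gcd_dvd_left i q
  have hgpos : 0 < g := Nat.gcd_pos_of_pos_right i hq
  have hglt : g < q := by
    rcases lt_or_eq_of_le (Nat.le_of_dvd hq hgq) with h | h
    · exact h
    · exact absurd (h ▸ hgi) hnd
  -- Q = (Q.take g) ^ (q / g)
  have hgmod : ∀ n, F n = F (n % g) := per_mod hperg
  have hRlen : (Q.take g).length = g := by
    simp [Nat.le_of_lt hglt]
    exact Nat.le_of_lt hglt
  have hQeq : Q = listPow (Q.take g) (q / g) := by
    apply List.ext_getElem
    · rw [listPow_length, hRlen, Nat.div_mul_cancel hgq]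
    · intro n h1 h2
      have hRpos : 0 < (Q.take g).length := by rw [hRlen]; exact hgpos
      rw [listPow_getElem _ hRpos _ _ h2, List.getElem_take]
      have hmm : n % (Q.take g).length = n % g := by rw [hRlen]
      have e1 : Q[n] = F n := by
        simp only [hFdef, perF]
        congr 1
        exact (Nat.mod_eq_of_lt h1).symm
      have e2 : Q[n % (Q.take g).length]'(by
          rw [hRlen]; exact lt_trans (Nat.mod_lt _ hgpos) hglt) = F (n % g) := by
        simp only [hFdef, perF]
        congr 1
        rw [hmm]
        exact (Nat.mod_eq_of_lt (lt_trans (Nat.mod_lt _ hgpos) hglt)).symm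
      rw [e1, hgmod n, ← e2]
  have hdiv1 := hQ.2 (Q.take g) (q / g) hQeq
  have h2 : g * (q / g) = q := Nat.mul_div_cancel' hgq
  rw [hdiv1, Nat.mul_one] at h2
  omega

lemma infSeg_eq (Q : List α) (hq : 0 < Q.length) (a m : ℕ) (hm : 1 ≤ m) :
    infSeg Q (a + 1) (a + m) = (List.range m).map (fun t => perF Q hq (a + t)) := by
  unfold infSeg substr
  have e1 : a + 1 - 1 = a := by omega
  have e2 : a + m - (a + 1) + 1 = m := by omega
  rw [e1, e2]
  have hlen : (listPow Q (a + m)).length = (a + m) * Q.length := listPow_length Q _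
  have hge : a + m ≤ (a + m) * Q.length := Nat.le_mul_of_pos_right _ hq
  apply List.ext_getElem
  · simp only [List.length_take, List.length_drop, hlen, List.length_map,
      List.length_range]
    omega
  · intro n h1 h2
    have hn : n < m := by simpa using h2
    rw [List.getElem_take, List.getElem_drop]
    rw [listPow_getElem Q hq _ _ (by rw [hlen]; omega)]
    simp [perF]

lemma hamDist_map [DecidableEq α] (f g : ℕ → α) (l : List ℕ) :
    hamDist (l.map f) (l.map g) = (l.filter (fun t => decide (f t ≠ g t))).length := by
  unfold hamDist
  rw [List.zip_map', List.filter_map, List.length_map]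
  rfl

/-- if `Q` is primitive and `i ≥ 1` is not a multiple of `|Q|`, then for
every `m ≥ 1`, `hd(Q^∞[1..m], Q^∞[i+1..i+m]) ≥ ⌊m/|Q|⌋`. -/
theorem primitive_shift_mismatch [DecidableEq α] (Q : List α) (hQ : PrimitiveStr Q)
    (i : ℕ) (hi : 1 ≤ i) (hnd : ¬ Q.length ∣ i) :
    ∀ m : ℕ, 1 ≤ m →
      m / Q.length ≤ hamDist (infSeg Q 1 m) (infSeg Q (i + 1) (i + m)) := by
  intro m hm
  have hq : 0 < Q.length := List.length_pos_iff.mpr hQ.1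
  set q := Q.length with hqdef
  set F := perF Q hq with hFdef
  have hseg1 : infSeg Q 1 m = (List.range m).map (fun t => F (0 + t)) := by
    have := infSeg_eq Q hq 0 m hm
    simpa using this
  have hseg2 : infSeg Q (i + 1) (i + m) = (List.range m).map (fun t => F (i + t)) :=
    infSeg_eq Q hq i m hm
  rw [hseg1, hseg2, hamDist_map]
  -- existence of a mismatch position in [0, q)
  obtain ⟨t₀, ht₀q, ht₀⟩ := exists_mismatch Q hQ hq i hnd
  have hperq : ∀ t, F (t + q) = F t := perF_period Q hq
  have hFmod : ∀ n, F n = F (n % q) := per_mod hperq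
  -- the injection from blocks
  set P : ℕ → Bool := fun t => decide (F (0 + t) ≠ F (i + t)) with hPdef
  set L : List ℕ := (List.range (m / q)).map (fun k => q * k + t₀) with hLdef
  have hnodup : L.Nodup := by
    refine List.Nodup.map ?_ List.nodup_range
    intro k1 k2 he
    simp only at he
    have : q * k1 = q * k2 := by omega
    exact Nat.eq_of_mul_eq_mul_left hq this
  have hsub : L ⊆ (List.range m).filter P := by
    intro x hx
    rw [hLdef, List.mem_map] at hx
    obtain ⟨k, hk, rfl⟩ := hx
    rw [List.mem_range] at hk
    rw [List.mem_filter, List.mem_range]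
    constructor
    · have h1 : q * (k + 1) ≤ q * (m / q) := Nat.mul_le_mul_left q hk
      have h2 : q * (m / q) ≤ m := Nat.mul_div_le m q
      have h3 : q * k + t₀ < q * (k + 1) := by
        rw [Nat.mul_succ]; omega
      omega
    · rw [hPdef]
      simp only [decide_eq_true_eq]
      have e1 : F (0 + (q * k + t₀)) = F t₀ := by
        rw [Nat.zero_add, hFmod, Nat.add_comm (q * k) t₀, Nat.mul_comm,
          Nat.add_mul_mod_self_right, ← hFmod]
      have e2 : F (i + (q * k + t₀)) = F (i + t₀) := by
        rw [hFmod (i + (q * k + t₀)), hFmod (i + t₀)]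
        congr 1
        have he : i + (q * k + t₀) = (i + t₀) + k * q := by ring
        rw [he, Nat.add_mul_mod_self_right]
      rw [e1, e2]
      exact ht₀
  have hle := (hnodup.subperm hsub).length_le
  rw [hLdef, List.length_map, List.length_range] at hle
  exact hle
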